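/- arXiv:2106.01171 — 6 statements merged into one kernel-verified Lean document; each statement's English description precedes it below -/
import Mathlib

section
/- Every punctuated homotopy is a strong homotopy: if H : X × {0,1,…,k} → Y is a homotopy such that for each 0 ≤ t < k there is a point x_t ∈ X with H(x,t) = H(x,t+1) for all x ≠ x_t, then H(x,t) ⟷= H(x',t') whenever x ⟷= x', |t−t'| ≤ 1, and (x,t) ≠ (x',t'). -/
/-- A function between digital images (simple graphs) is digitally continuous if
adjacent points map to adjacent-or-equal points. -/
def DigCont {X Y : Type*} (GX : SimpleGraph X) (GY : SimpleGraph Y) (f : X → Y) : Prop :=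
  ∀ x x', GX.Adj x x' → (GY.Adj (f x) (f x') ∨ f x = f x')

/-- `H : X × {0,…,k} → Y` is a (digital) homotopy of length `k` from `f` to `g`. -/
def IsHomotopy {X Y : Type*} (GX : SimpleGraph X) (GY : SimpleGraph Y)
    (f g : X → Y) (k : ℕ) (H : X → ℕ → Y) : Prop :=
  (∀ x, H x 0 = f x) ∧ (∀ x, H x k = g x) ∧
  (∀ t ≤ k, DigCont GX GY fun x => H x t) ∧
  (∀ x, ∀ t < k, GY.Adj (H x t) (H x (t + 1)) ∨ H x t = H x (t + 1))

/-- `H` is continuous with respect to the `NP₂` normal product adjacency on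
`X × {0,…,k}`: whenever `x ⟷= x'`, `|t - t'| ≤ 1` and `(x,t) ≠ (x',t')`, the
values `H x t` and `H x' t'` are adjacent or equal. -/
def NP2Cont {X Y : Type*} (GX : SimpleGraph X) (GY : SimpleGraph Y)
    (k : ℕ) (H : X → ℕ → Y) : Prop :=
  ∀ x x' t t', (GX.Adj x x' ∨ x = x') → t ≤ k → t' ≤ k →
    t ≤ t' + 1 → t' ≤ t + 1 → (x, t) ≠ (x', t') →
    (GY.Adj (H x t) (H x' t') ∨ H x t = H x' t')

/-- A strong homotopy of length `k` from `f` to `g`. -/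
def IsStrongHomotopy {X Y : Type*} (GX : SimpleGraph X) (GY : SimpleGraph Y)
    (f g : X → Y) (k : ℕ) (H : X → ℕ → Y) : Prop :=
  IsHomotopy GX GY f g k H ∧ NP2Cont GX GY k H

/-- `f` and `g` are strongly homotopic. -/
def StronglyHomotopic {X Y : Type*} (GX : SimpleGraph X) (GY : SimpleGraph Y)
    (f g : X → Y) : Prop :=
  ∃ k H, IsStrongHomotopy GX GY f g k H

/-- A homotopy of length `k` is punctuated if from each stage to the next it
changes the value at no more than one point. -/
def Punctuated {X Y : Type*} (k : ℕ) (H : X → ℕ → Y) : Prop :=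
  ∀ t < k, ∃ x₀ : X, ∀ x ≠ x₀, H x t = H x (t + 1)

/-- every punctuated homotopy is a strong homotopy. -/
theorem punctuated_is_strong {X Y : Type*} (GX : SimpleGraph X) (GY : SimpleGraph Y)
    (f g : X → Y) (k : ℕ) (H : X → ℕ → Y)
    (hH : IsHomotopy GX GY f g k H) (hP : Punctuated k H) :
    NP2Cont GX GY k H := by
  obtain ⟨-, -, hcont, hstep⟩ := hH
  -- key step: adjacent points, consecutive times
  have key : ∀ x x' t, GX.Adj x x' → t < k →
      GY.Adj (H x t) (H x' (t+1)) ∨ H x t = H x' (t+1) := by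
    intro x x' t hadj ht
    obtain ⟨x₀, hx₀⟩ := hP t ht
    by_cases hx : x = x₀
    · have hx' : x' ≠ x₀ := fun h => (GX.ne_of_adj hadj) (hx.trans h.symm)
      rw [← hx₀ x' hx']
      exact hcont t ht.le x x' hadj
    · rw [hx₀ x hx]
      exact hcont (t+1) ht x x' hadj
  intro x x' t t' hxx ht ht' htt htt' hne
  rcases Nat.lt_trichotomy t t' with h | h | h
  · have ht'eq : t' = t + 1 := le_antisymm htt' h
    subst ht'eq
    have htk : t < k := ht'
    rcases hxx with hadj | rfl
    · exact key x x' t hadj htk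
    · exact hstep x t htk
  · subst h
    rcases hxx with hadj | rfl
    · exact hcont t ht x x' hadj
    · exact absurd rfl hne
  · have hteq : t = t' + 1 := le_antisymm htt h
    subst hteq
    have htk : t' < k := ht
    rcases hxx with hadj | rfl
    · rcases key x' x t' hadj.symm htk with h | h
      · exact Or.inl h.symm
      · exact Or.inr h.symm
    · rcases hstep x t' htk with h | h
      · exact Or.inl h.symm
      · exact Or.inr h.symm
end

section
/- Let X be a finite digital image and let f, g : X → Y be continuous maps that are strongly homotopic. Then there is a punctuated homotopy from f to g. -/
/-- One step of a strong homotopy can be refined into a punctuated homotopy. -/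
lemma step_punctuated {X Y : Type*} [Fintype X]
    (GX : SimpleGraph X) (GY : SimpleGraph Y)
    (f g : X → Y) (k : ℕ) (H : X → ℕ → Y)
    (hH : IsStrongHomotopy GX GY f g k H) (t : ℕ) (ht : t < k) :
    ∃ m L, IsHomotopy GX GY (fun x => H x t) (fun x => H x (t + 1)) m L ∧ Punctuated m L := by
  classical
  obtain ⟨⟨h0, hk, hcont, hstep⟩, hnp⟩ := hH
  set e := Fintype.equivFin X with he
  set n := Fintype.card X
  refine ⟨n, fun x j => if (e x : ℕ) < j then H x (t + 1) else H x t, ⟨?_, ?_, ?_, ?_⟩, ?_⟩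
  · intro x; simp
  · intro x; simp [(e x).isLt]
  · intro j hj x x' hadj
    have hne : x ≠ x' := hadj.ne
    by_cases h1 : (e x : ℕ) < j <;> by_cases h2 : (e x' : ℕ) < j <;>
      simp only [h1, h2, if_true, if_false, if_pos, if_neg] <;>
      exact hnp x x' _ _ (Or.inl hadj) (by omega) (by omega) (by omega) (by omega)
        (by simp [hne])
  · intro x j hj
    beta_reduce
    by_cases h1 : (e x : ℕ) < j
    · rw [if_pos h1, if_pos (by omega : (e x : ℕ) < j + 1)]
      exact Or.inr rfl
    · by_cases h2 : (e x : ℕ) < j + 1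
      · rw [if_neg h1, if_pos h2]
        exact hstep x t ht
      · rw [if_neg h1, if_neg h2]
        exact Or.inr rfl
  · intro j hj
    refine ⟨e.symm ⟨j, hj⟩, fun x hx => ?_⟩
    have : (e x : ℕ) ≠ j := by
      intro hEq
      apply hx
      have : e x = ⟨j, hj⟩ := Fin.ext hEq
      rw [← this, Equiv.symm_apply_apply]
    beta_reduce
    by_cases h1 : (e x : ℕ) < j
    · rw [if_pos h1, if_pos (by omega : (e x : ℕ) < j + 1)]
    · rw [if_neg h1, if_neg (by omega : ¬ (e x : ℕ) < j + 1)]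

/-- Concatenation of punctuated homotopies. -/
lemma concat_punctuated {X Y : Type*}
    (GX : SimpleGraph X) (GY : SimpleGraph Y)
    (f g h : X → Y) (k₁ k₂ : ℕ) (H₁ H₂ : X → ℕ → Y)
    (h1 : IsHomotopy GX GY f g k₁ H₁) (p1 : Punctuated k₁ H₁)
    (h2 : IsHomotopy GX GY g h k₂ H₂) (p2 : Punctuated k₂ H₂) :
    ∃ m L, IsHomotopy GX GY f h m L ∧ Punctuated m L := by
  obtain ⟨h10, h1k, h1c, h1s⟩ := h1
  obtain ⟨h20, h2k, h2c, h2s⟩ := h2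
  refine ⟨k₁ + k₂, fun x s => if s ≤ k₁ then H₁ x s else H₂ x (s - k₁), ⟨?_, ?_, ?_, ?_⟩, ?_⟩
  · intro x; simp [h10]
  · intro x
    beta_reduce
    by_cases hc : k₁ + k₂ ≤ k₁
    · have hz : k₂ = 0 := by omega
      rw [if_pos hc, show k₁ + k₂ = k₁ from by omega, h1k x, ← h20 x]
      have := h2k x
      rw [hz] at this
      rw [this]
    · rw [if_neg hc, show k₁ + k₂ - k₁ = k₂ from by omega, h2k]
  · intro s hs x x' hadj
    by_cases hc : s ≤ k₁
    · simp only [if_pos hc]; exact h1c s hc x x' hadj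
    · simp only [if_neg hc]; exact h2c (s - k₁) (by omega) x x' hadj
  · intro x s hs
    beta_reduce
    by_cases hc : s + 1 ≤ k₁
    · rw [if_pos hc, if_pos (by omega : s ≤ k₁)]
      exact h1s x s (by omega)
    · by_cases hc2 : s ≤ k₁
      · have hsk : s = k₁ := by omega
        rw [if_pos hc2, if_neg hc]
        have e1 : H₁ x s = H₂ x 0 := by rw [hsk, h1k, h20]
        have e2 : s + 1 - k₁ = 1 := by omega
        rw [e1, e2]
        exact h2s x 0 (by omega)
      · rw [if_neg hc, if_neg hc2]
        have e2 : s + 1 - k₁ = (s - k₁) + 1 := by omega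
        rw [e2]
        exact h2s x (s - k₁) (by omega)
  · intro s hs
    by_cases hc : s + 1 ≤ k₁
    · obtain ⟨x₀, hx₀⟩ := p1 s (by omega)
      exact ⟨x₀, fun x hx => by
        beta_reduce
        rw [if_pos hc, if_pos (by omega : s ≤ k₁)]; exact hx₀ x hx⟩
    · by_cases hc2 : s ≤ k₁
      · have hsk : s = k₁ := by omega
        obtain ⟨x₀, hx₀⟩ := p2 0 (by omega)
        refine ⟨x₀, fun x hx => ?_⟩
        beta_reduce
        rw [if_pos hc2, if_neg hc]
        have e1 : H₁ x s = H₂ x 0 := by rw [hsk, h1k, h20]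
        have e2 : s + 1 - k₁ = 1 := by omega
        rw [e1, e2]
        exact hx₀ x hx
      · obtain ⟨x₀, hx₀⟩ := p2 (s - k₁) (by omega)
        refine ⟨x₀, fun x hx => ?_⟩
        beta_reduce
        rw [if_neg hc, if_neg hc2]
        have e2 : s + 1 - k₁ = (s - k₁) + 1 := by omega
        rw [e2]
        exact hx₀ x hx

/-- Theorem `punctuatedthm`: if `X` is finite and `f, g : X → Y`
are continuous and strongly homotopic, then there is a punctuated homotopy from
`f` to `g`. -/
theorem punctuated_of_stronglyHomotopic {X Y : Type*} [Finite X]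
    (GX : SimpleGraph X) (GY : SimpleGraph Y)
    (f g : X → Y) (hf : DigCont GX GY f) (hg : DigCont GX GY g)
    (h : StronglyHomotopic GX GY f g) :
    ∃ k H, IsHomotopy GX GY f g k H ∧ Punctuated k H := by
  classical
  have : Fintype X := Fintype.ofFinite X
  obtain ⟨k, H, hH⟩ := h
  clear hf hg
  induction k generalizing g with
  | zero =>
    obtain ⟨⟨h0, hk, hcont, _⟩, _⟩ := hH
    refine ⟨0, fun x _ => f x, ⟨fun x => rfl, fun x => ?_, ?_, ?_⟩, ?_⟩
    · show f x = g x
      rw [← h0 x, hk x]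
    · intro t ht
      have : t = 0 := by omega
      subst this
      have := hcont 0 le_rfl
      intro x x' hadj
      simpa [h0] using this x x' hadj
    · intro x t ht; omega
    · intro t ht; omega
  | succ k ih =>
    obtain ⟨⟨h0, hk, hcont, hstep⟩, hnp⟩ := hH
    -- restriction to first k steps is a strong homotopy f → H · k
    have hrest : IsStrongHomotopy GX GY f (fun x => H x k) k H := by
      refine ⟨⟨h0, fun x => rfl, fun t ht => hcont t (by omega), fun x t ht => hstep x t (by omega)⟩, ?_⟩
      intro x x' t t' ha htk ht'k h1 h2 hne
      exact hnp x x' t t' ha (by omega) (by omega) h1 h2 hne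
    obtain ⟨m₁, L₁, hL₁, pL₁⟩ := ih (fun x => H x k) hrest
    have hlast : ∃ m L, IsHomotopy GX GY (fun x => H x k) (fun x => H x (k + 1)) m L ∧ Punctuated m L :=
      step_punctuated GX GY f g (k + 1) H ⟨⟨h0, hk, hcont, hstep⟩, hnp⟩ k (by omega)
    obtain ⟨m₂, L₂, hL₂, pL₂⟩ := hlast
    have hL₂' : IsHomotopy GX GY (fun x => H x k) g m₂ L₂ := by
      obtain ⟨a, b, c, d⟩ := hL₂
      exact ⟨a, fun x => by rw [b x]; exact hk x, c, d⟩
    exact concat_punctuated GX GY f (fun x => H x k) g m₁ m₂ L₁ L₂ hL₁ pL₁ hL₂' pL₂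
end

section
/- Let X be a finite digital image and Y a digital image. Two continuous maps f, g : X → Y are strongly homotopic if and only if there is a punctuated homotopy from f to g. -/
lemma succ_div_mod' (n s : ℕ) (hn : 0 < n) :
    ((s+1) % n = s % n + 1 ∧ (s+1)/n = s/n) ∨
    (s % n + 1 = n ∧ (s+1) % n = 0 ∧ (s+1)/n = s/n + 1) := by
  have h1 : n * (s / n) + s % n = s := Nat.div_add_mod s n
  have h2 : s % n < n := Nat.mod_lt s hn
  rcases Nat.lt_or_ge (s % n + 1) n with h | h
  · left
    have hs : s + 1 = (s % n + 1) + n * (s / n) := by omega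
    constructor
    · rw [hs, Nat.add_mul_mod_self_left, Nat.mod_eq_of_lt h]
    · rw [hs, Nat.add_mul_div_left _ _ hn, Nat.div_eq_of_lt h, zero_add]
  · right
    have heq : s % n + 1 = n := by omega
    have hd : n * (s / n + 1) = n * (s / n) + n := by ring
    have hs : s + 1 = n * (s / n + 1) := by omega
    refine ⟨heq, ?_, ?_⟩
    · rw [hs, Nat.mul_mod_right]
    · rw [hs, Nat.mul_div_cancel_left _ hn]

lemma T_step' (n s i : ℕ) (hn : 0 < n) (hi : i < n) :
    (s+1)/n + (if i < (s+1) % n then 1 else 0)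
      = s/n + (if i < s % n then 1 else 0) + (if i = s % n then 1 else 0) := by
  rcases succ_div_mod' n s hn with ⟨h1, h2⟩ | ⟨h1, h2, h3⟩
  · rw [h1, h2]; split_ifs <;> omega
  · rw [h2, h3]; split_ifs <;> omega

/-- for `X` finite, continuous maps `f, g : X → Y` are strongly
homotopic iff there is a punctuated homotopy from `f` to `g`. -/
theorem stronglyHomotopic_iff_punctuated {X Y : Type*} [Finite X]
    (GX : SimpleGraph X) (GY : SimpleGraph Y)
    (f g : X → Y) (hf : DigCont GX GY f) (hg : DigCont GX GY g) :
    StronglyHomotopic GX GY f g ↔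
      ∃ k H, IsHomotopy GX GY f g k H ∧ Punctuated k H := by
  constructor
  · rintro ⟨k, H, ⟨hH, hNP⟩⟩
    obtain ⟨hH0, hHk, hHcont, hHstep⟩ := hH
    rcases isEmpty_or_nonempty X with hX | hX
    · refine ⟨0, fun x _ => f x, ⟨fun x => rfl, fun x => ?_, ?_, fun x => (hX.false x).elim⟩,
        fun t ht => absurd ht (Nat.not_lt_zero t)⟩
      · exact (hX.false x).elim
      · intro t ht x x' hadj; exact (hX.false x).elim
    · haveI : Fintype X := Fintype.ofFinite X
      set n := Fintype.card X with hncard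
      have hn : 0 < n := Fintype.card_pos
      set e : X ≃ Fin n := Fintype.equivFin X with he
      set T : X → ℕ → ℕ := fun x s => s / n + if (e x : ℕ) < s % n then 1 else 0 with hT
      have hTle : ∀ x s, s ≤ k * n → T x s ≤ k := by
        intro x s hs
        have h1 : n * (s / n) + s % n = s := Nat.div_add_mod s n
        have hq : s / n ≤ k := by
          have h3 : s / n ≤ k * n / n := Nat.div_le_div_right hs
          rwa [Nat.mul_div_cancel _ hn] at h3
        simp only [hT]
        split_ifs with hlt
        · -- need s / n < k
          have hpos : 0 < s % n := by omega
          by_cases hqk : s / n = k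
          · exfalso
            rw [hqk] at h1
            have hc : n * k = k * n := Nat.mul_comm n k
            omega
          · omega
        · omega
      have hTstep : ∀ x s, T x (s+1) = T x s + (if (e x : ℕ) = s % n then 1 else 0) := by
        intro x s
        simp only [hT]
        exact T_step' n s (e x) hn (e x).2
      have hTbound : ∀ x s, s / n ≤ T x s ∧ T x s ≤ s / n + 1 := by
        intro x s; simp only [hT]; split_ifs <;> omega
      refine ⟨k * n, fun x s => H x (T x s), ⟨?_, ?_, ?_, ?_⟩, ?_⟩
      · intro x
        have h0 : T x 0 = 0 := by simp [hT]
        show H x (T x 0) = f x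
        rw [h0, hH0]
      · intro x
        have h0 : T x (k * n) = k := by
          simp only [hT]
          rw [Nat.mul_div_cancel _ hn, Nat.mul_mod_left]
          simp
        show H x (T x (k * n)) = g x
        rw [h0, hHk]
      · intro s hs x x' hadj
        have b1 := hTbound x s
        have b2 := hTbound x' s
        refine hNP x x' (T x s) (T x' s) (Or.inl hadj) (hTle x s hs) (hTle x' s hs)
          (by omega) (by omega) ?_
        intro hc
        exact hadj.ne (congrArg Prod.fst hc)
      · intro x s hs
        by_cases hc : (e x : ℕ) = s % n
        · have h1 : T x (s+1) = T x s + 1 := by rw [hTstep]; simp [hc]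
          show GY.Adj (H x (T x s)) (H x (T x (s + 1))) ∨ H x (T x s) = H x (T x (s + 1))
          rw [h1]
          have h2 : T x s < k := by
            have := hTle x (s+1) (by omega)
            omega
          exact hHstep x (T x s) h2
        · have h1 : T x (s+1) = T x s := by rw [hTstep]; simp [hc]
          right
          show H x (T x s) = H x (T x (s + 1))
          rw [h1]
      · intro s hs
        refine ⟨e.symm ⟨s % n, Nat.mod_lt s hn⟩, ?_⟩
        intro x hx
        have hc : (e x : ℕ) ≠ s % n := by
          intro hc
          apply hx
          have h2 : e x = ⟨s % n, Nat.mod_lt s hn⟩ := Fin.ext hc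
          rw [← h2, Equiv.symm_apply_apply]
        have h1 : T x (s+1) = T x s := by rw [hTstep]; simp [hc]
        show H x (T x s) = H x (T x (s + 1))
        rw [h1]
  · rintro ⟨k, H, hH, hP⟩
    obtain ⟨hH0, hHk, hHcont, hHstep⟩ := hH
    refine ⟨k, H, ⟨hH0, hHk, hHcont, hHstep⟩, ?_⟩
    have key : ∀ x x' t, (GX.Adj x x' ∨ x = x') → t + 1 ≤ k →
        GY.Adj (H x t) (H x' (t+1)) ∨ H x t = H x' (t+1) := by
      intro x x' t hxx' htk
      obtain ⟨x₀, hx₀⟩ := hP t (by omega)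
      by_cases hx' : x' = x₀
      · subst hx'
        rcases hxx' with hadj | heq
        · have h1 : H x t = H x (t+1) := hx₀ x hadj.ne
          rw [h1]
          exact hHcont (t+1) htk x x' hadj
        · subst heq
          exact hHstep x t (by omega)
      · rw [← hx₀ x' hx']
        rcases hxx' with hadj | heq
        · exact hHcont t (by omega) x x' hadj
        · subst heq; right; rfl
    intro x x' t t' hxx' ht ht' h1 h2 hne
    rcases Nat.lt_trichotomy t t' with hlt | heq | hgt
    · have : t' = t + 1 := by omega
      subst this
      exact key x x' t hxx' ht'
    · subst heq
      have hx : x ≠ x' := by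
        intro hc; exact hne (by rw [hc])
      rcases hxx' with hadj | heq
      · exact hHcont t ht x x' hadj
      · exact absurd heq hx
    · have : t = t' + 1 := by omega
      subst this
      have hsym : GX.Adj x' x ∨ x' = x := hxx'.imp (fun h => h.symm) (fun h => h.symm)
      rcases key x' x t' hsym ht with h | h
      · exact Or.inl h.symm
      · exact Or.inr h.symm
end

section
/- There is no continuous map f : C₄ → C₄ whose image has cardinality strictly less than 4 and which is strongly homotopic in one step to the identity map of C₄. -/
/-- The digital cycle `C_n`: points indexed by `ZMod n`, with `i ⟷ j` iff
`j = i ± 1` and `i ≠ j`. -/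
def digitalCycle (n : ℕ) : SimpleGraph (ZMod n) where
  Adj i j := i ≠ j ∧ (j = i + 1 ∨ i = j + 1)
  symm := ⟨fun i j h => ⟨h.1.symm, h.2.symm⟩⟩
  loopless := ⟨fun i h => h.1 rfl⟩


instance : DecidableRel (digitalCycle 4).Adj :=
  fun i j => inferInstanceAs (Decidable (i ≠ j ∧ (j = i + 1 ∨ i = j + 1)))

lemma key (x a : ZMod 4)
    (h1 : (digitalCycle 4).Adj a x ∨ a = x)
    (h2 : (digitalCycle 4).Adj a (x + 1) ∨ a = x + 1)
    (h3 : (digitalCycle 4).Adj a (x - 1) ∨ a = x - 1) : a = x := by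
  revert h1 h2 h3; revert x a; decide

/-- Example `strongrigid`: no continuous selfmap of `C₄` whose
image has fewer than `4` points is strongly homotopic in one step to the
identity map of `C₄`. -/
theorem no_small_image_strongly_one_step_to_id :
    ¬ ∃ f : ZMod 4 → ZMod 4, DigCont (digitalCycle 4) (digitalCycle 4) f ∧
      (Set.range f).ncard < 4 ∧
      (∃ H, IsStrongHomotopy (digitalCycle 4) (digitalCycle 4) f id 1 H) := by
  rintro ⟨f, hc, hcard, H, ⟨⟨h0, h1, -, -⟩, np⟩⟩
  have hfid : f = id := by
    funext x
    have adj1 : (digitalCycle 4).Adj x (x + 1) := by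
      constructor
      · revert x; decide
      · exact Or.inl rfl
    have adj2 : (digitalCycle 4).Adj x (x - 1) := by
      constructor
      · revert x; decide
      · exact Or.inr (by ring)
    have e1 := np x x 0 1 (Or.inr rfl) (by norm_num) le_rfl (by norm_num) (by norm_num)
      (by simp)
    have e2 := np x (x + 1) 0 1 (Or.inl adj1) (by norm_num) le_rfl (by norm_num) (by norm_num)
      (by simp)
    have e3 := np x (x - 1) 0 1 (Or.inl adj2) (by norm_num) le_rfl (by norm_num) (by norm_num)
      (by simp)
    rw [h0, h1] at e1 e2 e3
    simp only [id] at e1 e2 e3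
    exact key x (f x) e1 e2 e3
  subst hfid
  rw [Set.range_id] at hcard
  simp [Set.ncard_univ] at hcard
end

section
/- Let n ≥ 4 and let f : C_n → C_n be a continuous map that is strongly homotopic to the identity map of C_n. Then f is equal to the identity map. -/
lemma zmod_small_ne (n : ℕ) (hn : 4 ≤ n) (m : ℕ) (hm : 0 < m) (hmn : m < n) :
    (m : ZMod n) ≠ 0 := by
  haveI : NeZero n := ⟨by omega⟩
  intro hh
  rw [ZMod.natCast_eq_zero_iff] at hh
  exact absurd (Nat.le_of_dvd hm hh) (by omega)

lemma key_arith (n : ℕ) (hn : 4 ≤ n) (x a : ZMod n)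
    (h0 : (digitalCycle n).Adj a x ∨ a = x)
    (h1 : (digitalCycle n).Adj a (x + 1) ∨ a = x + 1)
    (h2 : (digitalCycle n).Adj a (x - 1) ∨ a = x - 1) : a = x := by
  have n1 : (1 : ZMod n) ≠ 0 := by
    have := zmod_small_ne n hn 1 (by omega) (by omega); simpa using this
  have n2 : (2 : ZMod n) ≠ 0 := by
    have := zmod_small_ne n hn 2 (by omega) (by omega); simpa using this
  have n3 : (3 : ZMod n) ≠ 0 := by
    have := zmod_small_ne n hn 3 (by omega) (by omega); simpa using this
  rcases h0 with ⟨hne, hx⟩ | rfl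
  · rcases hx with hx | hx
    · -- x = a + 1, i.e. a = x - 1
      have ha : a = x - 1 := by linear_combination -hx
      subst ha
      rcases h1 with ⟨hne1, hx1⟩ | heq
      · rcases hx1 with hx1 | hx1
        · exact absurd (by linear_combination hx1) n1
        · exact absurd (by linear_combination -hx1) n3
      · exact absurd (by linear_combination -heq) n2
    · -- a = x + 1
      subst hx
      rcases h2 with ⟨hne2, hx2⟩ | heq
      · rcases hx2 with hx2 | hx2
        · exact absurd (by linear_combination -hx2) n3
        · exact absurd (by linear_combination hx2) n1
      · exact absurd (by linear_combination heq) n2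
  · rfl

/-- for `n ≥ 4`, any continuous selfmap of the digital cycle
`C_n` which is strongly homotopic to the identity map equals the identity map. -/
theorem eq_id_of_stronglyHomotopic_id (n : ℕ) (hn : 4 ≤ n)
    (f : ZMod n → ZMod n) (hf : DigCont (digitalCycle n) (digitalCycle n) f)
    (h : StronglyHomotopic (digitalCycle n) (digitalCycle n) f id) :
    f = id := by
  obtain ⟨k, H, ⟨⟨hH0, hHk, _, _⟩, hNP⟩⟩ := h
  have n1 : (1 : ZMod n) ≠ 0 := by
    have := zmod_small_ne n hn 1 (by omega) (by omega); simpa using this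
  have adj_r : ∀ x : ZMod n, (digitalCycle n).Adj x (x + 1) := by
    intro x
    exact ⟨by simpa [eq_comm] using n1, Or.inl rfl⟩
  have adj_l : ∀ x : ZMod n, (digitalCycle n).Adj x (x - 1) := by
    intro x
    refine ⟨?_, Or.inr (by ring)⟩
    intro hh
    exact n1 (by linear_combination hh)
  have key : ∀ j, ∀ x, H x (k - j) = x := by
    intro j
    induction j with
    | zero => intro x; simpa using hHk x
    | succ j ih =>
      intro x
      by_cases hjk : k ≤ j
      · have hh : k - (j + 1) = k - j := by omega
        rw [hh]; exact ih x
      · push_neg at hjk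
        set t := k - (j + 1) with ht
        have ht1 : t + 1 = k - j := by omega
        have htk : t ≤ k := by omega
        have ht1k : t + 1 ≤ k := by omega
        have hne : ∀ y : ZMod n, ((x : ZMod n), t) ≠ (y, t + 1) := by
          intro y hh
          have := congrArg Prod.snd hh
          simp at this
        have hA0 := hNP x x t (t + 1) (Or.inr rfl) htk ht1k (by omega) (by omega) (hne x)
        have hA1 := hNP x (x + 1) t (t + 1) (Or.inl (adj_r x)) htk ht1k (by omega) (by omega)
          (hne _)
        have hA2 := hNP x (x - 1) t (t + 1) (Or.inl (adj_l x)) htk ht1k (by omega) (by omega)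
          (hne _)
        rw [ht1, ih] at hA0 hA1 hA2
        exact key_arith n hn x (H x t) hA0 hA1 hA2
  funext x
  have := key k x
  simp only [Nat.sub_self] at this
  rw [hH0 x] at this
  simpa using this
end

section
/- Let X = ℤ × {0,1} with 8-adjacency (i.e., (a,b) ⟷ (a',b') iff |a−a'| ≤ 1, |b−b'| ≤ 1, and (a,b) ≠ (a',b')), and let f : X → X be given by f(a,b) = (a,0). Then f is continuous, f is strongly homotopic in one step to the identity map of X, but there is no punctuated homotopy (of any length) from f to the identity map of X. -/
/-- `ℤ × {0,1}` with 8-adjacency: `(a,b) ⟷ (a',b')` iff `|a−a'| ≤ 1`,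
`|b−b'| ≤ 1` and `(a,b) ≠ (a',b')`. -/
def strip8 : SimpleGraph (ℤ × Fin 2) where
  Adj p q := p ≠ q ∧ |p.1 - q.1| ≤ 1 ∧ |(p.2 : ℤ) - (q.2 : ℤ)| ≤ 1
  symm := ⟨fun p q h => ⟨h.1.symm, by rw [abs_sub_comm]; exact h.2.1,
    by rw [abs_sub_comm]; exact h.2.2⟩⟩
  loopless := ⟨fun p h => h.1 rfl⟩

lemma strip8_adjOrEq (p q : ℤ × Fin 2) (h : |p.1 - q.1| ≤ 1) :
    strip8.Adj p q ∨ p = q := by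
  by_cases hpq : p = q
  · exact Or.inr hpq
  · refine Or.inl ⟨hpq, h, ?_⟩
    have h1 := p.2.isLt
    have h2 := q.2.isLt
    rw [abs_le]
    omega

/-- on `X = ℤ × {0,1}` with 8-adjacency, the map
`f(a,b) = (a,0)` is continuous and strongly homotopic in one step to the
identity, but there is no punctuated homotopy from `f` to the identity. -/
theorem strip8_no_punctuated :
    DigCont strip8 strip8 (fun p : ℤ × Fin 2 => (p.1, (0 : Fin 2))) ∧
    (∃ H, IsStrongHomotopy strip8 strip8
      (fun p : ℤ × Fin 2 => (p.1, (0 : Fin 2))) id 1 H) ∧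
    ¬ ∃ k H, IsHomotopy strip8 strip8
      (fun p : ℤ × Fin 2 => (p.1, (0 : Fin 2))) id k H ∧ Punctuated k H := by
  refine ⟨?_, ?_, ?_⟩
  · intro x x' hx
    exact strip8_adjOrEq _ _ hx.2.1
  · refine ⟨fun p t => if t = 0 then (p.1, (0 : Fin 2)) else p, ⟨?_, ?_, ?_, ?_⟩, ?_⟩
    · intro x; simp
    · intro x; simp
    · intro t _ x x' hx
      have h1 : |x.1 - x'.1| ≤ 1 := hx.2.1
      by_cases ht : t = 0
      · subst ht
        exact strip8_adjOrEq (x.1, 0) (x'.1, 0) (by simpa using h1)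
      · simp only [if_neg ht]
        exact strip8_adjOrEq _ _ h1
    · intro x t ht
      interval_cases t
      exact strip8_adjOrEq _ _ (by simp)
    · intro x x' t t' hxx' _ _ _ _ _
      have h1 : |x.1 - x'.1| ≤ 1 := by
        rcases hxx' with h | rfl
        · exact h.2.1
        · simp
      have hfst : ∀ (p : ℤ × Fin 2) s, ((if s = 0 then (p.1, (0 : Fin 2)) else p)).1 = p.1 := by
        intro p s; by_cases hs : s = 0 <;> simp [hs]
      exact strip8_adjOrEq _ _ (by rw [hfst, hfst]; exact h1)
  · rintro ⟨k, H, ⟨h0, hk, _, _⟩, hp⟩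
    classical
    set x0 : ℕ → ℤ × Fin 2 := fun t => if h : t < k then (hp t h).choose else (0, 0) with hx0
    set a : ℤ := ((Finset.range k).sup fun t => (x0 t).1.natAbs) + 1 with ha
    have hne : ∀ t < k, ((a, (1 : Fin 2)) : ℤ × Fin 2) ≠ x0 t := by
      intro t ht heq
      have hle : (x0 t).1.natAbs ≤ (Finset.range k).sup fun t => (x0 t).1.natAbs :=
        Finset.le_sup (f := fun t => (x0 t).1.natAbs) (Finset.mem_range.mpr ht)
      have : (x0 t).1 = a := congrArg Prod.fst heq.symm
      omega
    have hconst : ∀ t ≤ k, H (a, (1 : Fin 2)) t = (a, (0 : Fin 2)) := by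
      intro t
      induction t with
      | zero => intro _; rw [h0]
      | succ n ih =>
        intro hn
        have hnk : n < k := hn
        have hstep := (hp n hnk).choose_spec (a, (1 : Fin 2)) (by
          have := hne n hnk
          simpa [hx0, hnk] using this)
        rw [← hstep]
        exact ih (le_of_lt hnk)
    have := (hconst k le_rfl).symm.trans (hk (a, (1 : Fin 2)))
    simp at this
end
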